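/- Let a, b, c be pairwise distinct letters, and let i, j, k be natural numbers with i·j ≥ 2. Set u = (a^i b)^j c c (a^i b)^j a^i c c b and v = a^k c c a^{k+i} c c. Then there exists a monoid homomorphism f : A* → A* with f(u) = v if and only if k = i·j. -/

import Mathlib

open FreeMonoid

section
variable {A : Type*}

open Classical in
noncomputable def cntHom8 (d : A) : FreeMonoid A →* Multiplicative ℕ :=
  FreeMonoid.lift fun x => Multiplicative.ofAdd (if x = d then 1 else 0)

noncomputable def cnt8 (d : A) (w : FreeMonoid A) : ℕ := (cntHom8 d w).toAdd

@[simp] lemma cnt8_mul (d : A) (u v : FreeMonoid A) :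
    cnt8 d (u * v) = cnt8 d u + cnt8 d v := by
  simp [cnt8, map_mul]

@[simp] lemma cnt8_pow (d : A) (u : FreeMonoid A) (n : ℕ) :
    cnt8 d (u ^ n) = n * cnt8 d u := by
  simp [cnt8, map_pow, toAdd_pow, smul_eq_mul]

@[simp] lemma cnt8_of_self (d : A) : cnt8 d (of d) = 1 := by
  simp [cnt8, cntHom8, FreeMonoid.lift_eval_of]

@[simp] lemma cnt8_of_ne {d e : A} (h : e ≠ d) : cnt8 d (of e) = 0 := by
  simp [cnt8, cntHom8, FreeMonoid.lift_eval_of, h]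

@[simp] lemma cnt8_one (d : A) : cnt8 d (1 : FreeMonoid A) = 0 := by
  simp [cnt8, map_one]

end

section
variable {A : Type*}

lemma allA8 {a : A} {x : FreeMonoid A} (h : ∀ d, d ≠ a → cnt8 d x = 0) :
    ∃ n, x = (of a) ^ n := by
  induction x using FreeMonoid.inductionOn' with
  | one => exact ⟨0, rfl⟩
  | of_mul e w ih =>
    have he : e = a := by
      by_contra hea
      have := h e hea
      simp at this
    obtain ⟨n, hn⟩ := ih (fun d hd => by have := h d hd; simp at this; tauto)
    exact ⟨n + 1, by rw [he, hn, pow_succ']⟩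

lemma oneC8 {a c : A} (hac : a ≠ c) {z : FreeMonoid A}
    (hc : cnt8 c z = 1) (h : ∀ d, d ≠ a → d ≠ c → cnt8 d z = 0) :
    ∃ p q, z = (of a) ^ p * of c * (of a) ^ q := by
  induction z using FreeMonoid.inductionOn' with
  | one => simp at hc
  | of_mul e w ih =>
    by_cases hec : e = c
    · subst hec
      have hw : ∀ d, d ≠ a → cnt8 d w = 0 := by
        intro d hd
        by_cases hdc : d = e
        · subst hdc; simp at hc; omega
        · have := h d hd hdc; simp [hdc] at this; tauto
      obtain ⟨q, hq⟩ := allA8 hw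
      exact ⟨0, q, by simp [hq]⟩
    · have hea : e = a := by
        by_contra hea
        have := h e hea hec
        simp at this
      have hcw : cnt8 c w = 1 := by
        simpa [cnt8_of_ne hec] using hc
      have hw : ∀ d, d ≠ a → d ≠ c → cnt8 d w = 0 := by
        intro d hda hdc
        have := h d hda hdc
        by_cases hde : d = e
        · exact absurd hde.symm (by rw [hea] at hde ⊢; exact fun h' => hda hde)
        · simp [hde] at this; tauto
      obtain ⟨p, q, hpq⟩ := ih hcw hw
      exact ⟨p + 1, q, by rw [hea, hpq, pow_succ', mul_assoc, mul_assoc, mul_assoc]⟩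

lemma repC8 {a c : A} (hac : a ≠ c) :
    ∀ n m (l l' : List A), List.replicate n a ++ c :: l = List.replicate m a ++ c :: l' →
      n = m ∧ l = l' := by
  intro n
  induction n with
  | zero =>
    intro m l l' h
    cases m with
    | zero => simpa using h
    | succ m => simp [List.replicate_succ] at h; exact absurd h.1 (Ne.symm hac)
  | succ n ih =>
    intro m l l' h
    cases m with
    | zero => simp [List.replicate_succ] at h; exact absurd h.1 hac
    | succ m =>
      simp only [List.replicate_succ, List.cons_append, List.cons.injEq] at h
      obtain ⟨h1, h2⟩ := ih m l l' h.2
      exact ⟨by omega, h2⟩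

@[simp] lemma toList_pow8 (a : A) (n : ℕ) :
    FreeMonoid.toList ((of a) ^ n) = List.replicate n a := by
  induction n with
  | zero => rfl
  | succ n ih => rw [pow_succ, toList_mul, ih, toList_of, List.replicate_succ']

end

lemma key8c {i j X Y Z : ℕ} (hi : 0 < i) (hj : 0 < j)
    (h : j * (i*X+Y) + Z + Z + j*(i*X+Y) + i*X + Z + Z + Y = 4) :
    X = 0 ∧ Y = 0 ∧ Z = 1 := by
  have hW : i * X = i * X := rfl
  nth_rewrite 2 [hW] at h
  generalize hWd : i * X = W at h
  generalize hTd : j * (W + Y) = T at h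
  have hX0 : W = 0 → X = 0 := by
    intro h0; rw [h0] at hWd
    rcases Nat.mul_eq_zero.mp hWd with h' | h'
    · omega
    · exact h'
  rcases Nat.lt_or_ge (W + Y) 1 with h1 | h1
  · have h0 : W + Y = 0 := by omega
    rw [h0, mul_zero] at hTd
    exact ⟨hX0 (by omega), by omega, by omega⟩
  rcases Nat.lt_or_ge (W + Y) 2 with h2 | h2
  · omega
  · have : j * 2 ≤ j * (W + Y) := Nat.mul_le_mul_left j h2
    omega

lemma key8z {i j X Y Z : ℕ} (hi : 0 < i)
    (h : j * (i*X+Y) + Z + Z + j*(i*X+Y) + i*X + Z + Z + Y = 0) :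
    X = 0 ∧ Y = 0 ∧ Z = 0 := by
  generalize hWd : i * X = W at h
  generalize hTd : j * (W + Y) = T at h
  have hX0 : W = 0 → X = 0 := by
    intro h0; rw [h0] at hWd
    rcases Nat.mul_eq_zero.mp hWd with h' | h'
    · omega
    · exact h'
  exact ⟨hX0 (by omega), by omega, by omega⟩

lemma last8 {A : Type*} {u v : FreeMonoid A} {d e : A} (h : u * of d = v * of e) : d = e := by
  have h' := congrArg (fun w => (FreeMonoid.toList w).getLast?) h
  simp only [toList_mul, toList_of, List.getLast?_append, List.getLast?_singleton,
    Option.or_some] at h'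
  exact Option.some.inj h'

lemma last8' {A : Type*} {u v : FreeMonoid A} {d e : A} {n : ℕ}
    (h : u * (of d)^(n+1) = v * of e) : d = e := by
  rw [pow_succ, ← mul_assoc] at h; exact last8 h

@[simp] lemma repmerge8 {A : Type*} (s t : ℕ) (e : A) (w : List A) :
    List.replicate s e ++ (List.replicate t e ++ w) = List.replicate (s+t) e ++ w := by
  rw [← List.append_assoc, ← List.replicate_add]

@[simp] lemma repmerge8' {A : Type*} (s t : ℕ) (e : A) :
    List.replicate s e ++ List.replicate t e = List.replicate (s+t) e := by
  rw [← List.replicate_add]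

/-- For pairwise distinct letters `a, b, c` and `ij ≥ 2`, there is a monoid endomorphism
`f` of `A*` with `f((a^i b)^j cc (a^i b)^j a^i cc b) = a^k cc a^{k+i} cc` iff `k = ij`. -/
theorem stmt8 {A : Type*} (a b c : A) (hab : a ≠ b) (hac : a ≠ c) (hbc : b ≠ c)
    (i j k : ℕ) (hij : 2 ≤ i * j) :
    (∃ f : FreeMonoid A →* FreeMonoid A,
        f (((FreeMonoid.of a) ^ i * FreeMonoid.of b) ^ j * FreeMonoid.of c * FreeMonoid.of c *
            ((FreeMonoid.of a) ^ i * FreeMonoid.of b) ^ j * (FreeMonoid.of a) ^ i *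
            FreeMonoid.of c * FreeMonoid.of c * FreeMonoid.of b) =
          (FreeMonoid.of a) ^ k * FreeMonoid.of c * FreeMonoid.of c *
            (FreeMonoid.of a) ^ (k + i) * FreeMonoid.of c * FreeMonoid.of c) ↔
      k = i * j := by
  classical
  have hi : 0 < i := Nat.pos_of_ne_zero (by rintro rfl; simp at hij)
  have hj : 0 < j := Nat.pos_of_ne_zero (by rintro rfl; simp at hij)
  constructor
  · rintro ⟨f, hf⟩
    simp only [map_mul, map_pow] at hf
    set x := f (of a) with hx
    set y := f (of b) with hy
    set z := f (of c) with hz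
    have hC := congrArg (cnt8 c) hf
    simp [cnt8_of_ne hac] at hC
    obtain ⟨hxc, hyc, hzc⟩ := key8c hi hj hC
    have hother : ∀ d, d ≠ a → d ≠ c → cnt8 d x = 0 ∧ cnt8 d y = 0 ∧ cnt8 d z = 0 := by
      intro d hda hdc
      have hD := congrArg (cnt8 d) hf
      simp [cnt8_of_ne (Ne.symm hda), cnt8_of_ne (Ne.symm hdc), hi.ne', hj.ne'] at hD
      tauto
    have hxall : ∀ d, d ≠ a → cnt8 d x = 0 := fun d hda => by
      by_cases hdc : d = c
      · subst hdc; exact hxc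
      · exact (hother d hda hdc).1
    have hyall : ∀ d, d ≠ a → cnt8 d y = 0 := fun d hda => by
      by_cases hdc : d = c
      · subst hdc; exact hyc
      · exact (hother d hda hdc).2.1
    have hzall : ∀ d, d ≠ a → d ≠ c → cnt8 d z = 0 := fun d h1 h2 => (hother d h1 h2).2.2
    obtain ⟨m, hm⟩ := allA8 hxall
    obtain ⟨n, hn⟩ := allA8 hyall
    obtain ⟨p, q, hz'⟩ := oneC8 hac hzc hzall
    have hn0 : n = 0 := by
      by_contra h0
      obtain ⟨n', rfl⟩ : ∃ n', n = n' + 1 := ⟨n - 1, by omega⟩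
      rw [hn] at hf
      exact hac (last8' hf)
    rw [hn0, pow_zero] at hn
    rw [hm, hn, hz'] at hf
    have hl := congrArg FreeMonoid.toList hf
    simp only [mul_one, toList_mul, toList_of, toList_pow8, ← pow_mul] at hl
    simp [List.append_assoc] at hl
    obtain ⟨e1a, e1b⟩ := repC8 hac _ _ _ _ hl
    have hl2 : List.replicate (q+p) a ++ c :: (List.replicate (q + m*i*j + m*i + p) a ++
        c :: (List.replicate (q+p) a ++ c :: List.replicate q a)) =
        List.replicate 0 a ++ c :: (List.replicate (k+i) a ++ [c, c]) := by simpa using e1b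
    obtain ⟨e2a, e2b⟩ := repC8 hac _ _ _ _ hl2
    have hl3 : List.replicate (q + m*i*j + m*i + p) a ++
        c :: (List.replicate (q+p) a ++ c :: List.replicate q a) =
        List.replicate (k+i) a ++ c :: (List.replicate 0 a ++ c :: List.replicate 0 a) := by
      simpa using e2b
    obtain ⟨e3a, e3b⟩ := repC8 hac _ _ _ _ hl3
    have hl4 : List.replicate (q+p) a ++ c :: List.replicate q a =
        List.replicate 0 a ++ c :: List.replicate 0 a := by simpa using e3b
    obtain ⟨e4a, e4b⟩ := repC8 hac _ _ _ _ hl4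
    have hq : q = 0 := by simpa using congrArg List.length e4b
    have hp : p = 0 := by omega
    subst hq hp
    generalize hM : m * i = M at e1a e3a
    generalize hN : M * j = N at e1a e3a
    have hMi : M = i := by omega
    subst hMi
    rw [hN]
    omega
  · rintro rfl
    set g : A → FreeMonoid A := fun e => if e = a then of a else if e = c then of c else 1
      with hg
    have fa : FreeMonoid.lift g (of a) = of a := by
      rw [FreeMonoid.lift_eval_of]; simp [hg]
    have fb : FreeMonoid.lift g (of b) = 1 := by
      rw [FreeMonoid.lift_eval_of]; simp [hg, Ne.symm hab, hbc]
    have fc : FreeMonoid.lift g (of c) = of c := by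
      rw [FreeMonoid.lift_eval_of]; simp [hg, Ne.symm hac]
    refine ⟨FreeMonoid.lift g, ?_⟩
    simp [map_mul, map_pow, fa, fb, fc, pow_mul, pow_add, mul_assoc]
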